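/- Let (Ω, F, (F_t)_{t∈ℕ}, P) be a filtered probability space and let (Z_t)_{t≥1} be an adapted martingale difference sequence. Suppose there exist M, σ > 0 such that for every t ≥ 0: on the event { sup_{s≤t} |Σ_{r=1}^s Z_r| ≤ M } one has E[Z_{t+1}² | F_t] ≤ σ². Then for every T ∈ ℕ, P( sup_{t≤T} |Σ_{s=1}^t Z_s| > M ) ≤ T σ² / M². -/

import Mathlib

open MeasureTheory

noncomputable section

private lemma integrable_mul_of_memL2 {Ω : Type*} {m0 : MeasurableSpace Ω} {μ : Measure Ω}
    {f g : Ω → ℝ} (hf : MemLp f 2 μ) (hg : MemLp g 2 μ) :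
    Integrable (fun x => f x * g x) μ := by
  have h1 := (hf.add hg).integrable_sq
  have h2 := hf.integrable_sq
  have h3 := hg.integrable_sq
  have h := (((h1.sub h2).sub h3).div_const 2)
  refine h.congr (Filter.Eventually.of_forall fun x => ?_)
  simp only [Pi.sub_apply, Pi.add_apply]
  ring

/-- Doob inequality with an induction-style variance hypothesis.
Let `(Z_t)_{t≥1}` be a martingale difference sequence such that, on the event that all
partial sums up to time `t` are bounded by `M`, the conditional variance of `Z_{t+1}`
given `F_t` is at most `σ²`. Then `P( sup_{t≤T} |Σ_{s=1}^t Z_s| > M ) ≤ T σ²/M²`. -/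
theorem doob_with_stochastic_induction {Ω : Type*} {m0 : MeasurableSpace Ω}
    (μ : Measure Ω) [IsProbabilityMeasure μ] (F : Filtration ℕ m0)
    (Z : ℕ → Ω → ℝ)
    (hadapted : ∀ t, StronglyMeasurable[F t] (Z t))
    (hL2 : ∀ t, MemLp (Z t) 2 μ)
    (hmds : ∀ t, μ[Z (t + 1)|F t] =ᵐ[μ] 0)
    (M σ : ℝ) (hM : 0 < M) (hσ : 0 < σ)
    (hvar : ∀ t, ∀ᵐ ω ∂μ,
      (∀ s ≤ t, |∑ r ∈ Finset.range s, Z (r + 1) ω| ≤ M) →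
      (μ[fun ω' => (Z (t + 1) ω') ^ 2|F t]) ω ≤ σ ^ 2)
    (T : ℕ) :
    μ {ω | ∃ t ≤ T, M < |∑ s ∈ Finset.range t, Z (s + 1) ω|}
      ≤ ENNReal.ofReal (T * σ ^ 2 / M ^ 2) := by
  classical
  set S : ℕ → Ω → ℝ := fun t ω => ∑ r ∈ Finset.range t, Z (r + 1) ω with hSdef
  set B : ℕ → Set Ω := fun t => {ω | ∀ s ≤ t, |S s ω| ≤ M} with hBdef
  set D : ℕ → Ω → ℝ := fun t => (B t).indicator (Z (t + 1)) with hDdef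
  set S' : ℕ → Ω → ℝ := fun t ω => ∑ r ∈ Finset.range t, D r ω with hS'def
  -- measurability of partial sums
  have hSmeas : ∀ t, StronglyMeasurable[F t] (S t) := by
    intro t
    apply Finset.stronglyMeasurable_fun_sum
    intro r hr
    exact (hadapted (r + 1)).mono (F.mono (Finset.mem_range.mp hr))
  have hBmeas : ∀ t, MeasurableSet[F t] (B t) := by
    intro t
    have : B t = ⋂ s ∈ Set.Iic t, {ω | |S s ω| ≤ M} := by
      ext ω; simp [hBdef, Set.mem_iInter]
    rw [this]
    refine MeasurableSet.biInter (Set.to_countable _) fun s hs => ?_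
    show MeasurableSet[F t] ((fun ω => |S s ω|) ⁻¹' Set.Iic M)
    exact (measurable_abs.comp ((hSmeas s).mono (F.mono hs)).measurable) measurableSet_Iic
  have hDL2 : ∀ t, MemLp (D t) 2 μ := fun t =>
    MemLp.indicator ((F.le t) _ (hBmeas t)) (hL2 (t + 1))
  have hS'L2 : ∀ t, MemLp (S' t) 2 μ := fun t =>
    memLp_finsetSum _ (fun r _ => hDL2 r)
  have hS'meas : ∀ t, StronglyMeasurable[F t] (S' t) := by
    intro t
    apply Finset.stronglyMeasurable_fun_sum
    intro r hr
    have hr' := Finset.mem_range.mp hr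
    exact StronglyMeasurable.indicator ((hadapted (r + 1)).mono (F.mono hr'))
      ((F.mono hr'.le) _ (hBmeas r))
  -- cross term vanishes
  have hcross : ∀ t, ∫ ω, S' t ω * D t ω ∂μ = 0 := by
    intro t
    set g : Ω → ℝ := (B t).indicator (S' t) with hgdef
    have hgmeas : StronglyMeasurable[F t] g := (hS'meas t).indicator (hBmeas t)
    have hgL2 : MemLp g 2 μ := MemLp.indicator ((F.le t) _ (hBmeas t)) (hS'L2 t)
    have heq : ∀ ω, S' t ω * D t ω = (g * Z (t + 1)) ω := by
      intro ω
      by_cases h : ω ∈ B t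
      · simp [hgdef, hDdef, Set.indicator_of_mem h]
      · simp [hgdef, hDdef, Set.indicator_of_notMem h]
    have hint : Integrable (g * Z (t + 1)) μ :=
      integrable_mul_of_memL2 hgL2 (hL2 (t + 1))
    have hpull := condExp_mul_of_stronglyMeasurable_left hgmeas hint ((hL2 (t + 1)).integrable one_le_two)
    have hzero : μ[g * Z (t + 1)|F t] =ᵐ[μ] 0 := by
      filter_upwards [hpull, hmds t] with ω h1 h2
      simp only [h1, Pi.mul_apply, Pi.zero_apply] at *
      simp [h2]
    calc ∫ ω, S' t ω * D t ω ∂μ = ∫ ω, (g * Z (t + 1)) ω ∂μ :=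
          integral_congr_ae (Filter.Eventually.of_forall heq)
      _ = ∫ ω, (μ[g * Z (t + 1)|F t]) ω ∂μ := (integral_condExp (F.le t) (f := g * Z (t + 1))).symm
      _ = 0 := by
          rw [integral_congr_ae hzero]
          simp
  -- variance term
  have hvarle : ∀ t, ∫ ω, (D t ω) ^ 2 ∂μ ≤ σ ^ 2 := by
    intro t
    have hBm0 : MeasurableSet (B t) := (F.le t) _ (hBmeas t)
    have hZ2int : Integrable (fun ω => (Z (t + 1) ω) ^ 2) μ := (hL2 (t + 1)).integrable_sq
    have h1 : ∫ ω, (D t ω) ^ 2 ∂μ = ∫ ω in B t, (Z (t + 1) ω) ^ 2 ∂μ := by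
      rw [← integral_indicator hBm0]
      refine integral_congr_ae (Filter.Eventually.of_forall fun ω => ?_)
      by_cases h : ω ∈ B t
      · simp [hDdef, Set.indicator_of_mem h]
      · simp [hDdef, Set.indicator_of_notMem h]
    have h2 : ∫ ω in B t, (Z (t + 1) ω) ^ 2 ∂μ
        = ∫ ω in B t, (μ[fun ω' => (Z (t + 1) ω') ^ 2|F t]) ω ∂μ :=
      (setIntegral_condExp (F.le t) hZ2int (hBmeas t)).symm
    have h3 : ∫ ω in B t, (μ[fun ω' => (Z (t + 1) ω') ^ 2|F t]) ω ∂μ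
        ≤ ∫ _ω in B t, σ ^ 2 ∂μ := by
      refine integral_mono_ae integrable_condExp.integrableOn
        (integrableOn_const (measure_ne_top _ _)) ?_
      rw [Filter.EventuallyLE, ae_restrict_iff' hBm0]
      filter_upwards [hvar t] with ω h hmem
      exact h hmem
    have h4 : ∫ _ω in B t, (σ : ℝ) ^ 2 ∂μ ≤ σ ^ 2 := by
      rw [setIntegral_const, measureReal_def]
      have hle : (μ (B t)).toReal ≤ 1 :=
        ENNReal.toReal_mono ENNReal.one_ne_top prob_le_one
      have h0 : (0:ℝ) ≤ σ ^ 2 := sq_nonneg σ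
      rw [smul_eq_mul]
      nlinarith
    linarith
  -- second moment of the stopped sum
  have hmom : ∀ t : ℕ, ∫ ω, (S' t ω) ^ 2 ∂μ ≤ (t : ℝ) * σ ^ 2 := by
    intro t
    induction t with
    | zero => simp [hS'def]
    | succ t ih =>
        have hexp : ∀ ω, (S' (t + 1) ω) ^ 2
            = (S' t ω) ^ 2 + (2 * (S' t ω * D t ω) + (D t ω) ^ 2) := by
          intro ω
          simp only [hS'def, Finset.sum_range_succ]
          ring
        have hi1 : Integrable (fun ω => (S' t ω) ^ 2) μ := (hS'L2 t).integrable_sq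
        have hi2 : Integrable (fun ω => S' t ω * D t ω) μ :=
          integrable_mul_of_memL2 (hS'L2 t) (hDL2 t)
        have hi3 : Integrable (fun ω => (D t ω) ^ 2) μ := (hDL2 t).integrable_sq
        calc ∫ ω, (S' (t + 1) ω) ^ 2 ∂μ
            = ∫ ω, ((S' t ω) ^ 2 + (2 * (S' t ω * D t ω) + (D t ω) ^ 2)) ∂μ :=
              integral_congr_ae (Filter.Eventually.of_forall hexp)
          _ = ∫ ω, (S' t ω) ^ 2 ∂μ
              + (2 * ∫ ω, S' t ω * D t ω ∂μ + ∫ ω, (D t ω) ^ 2 ∂μ) := by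
              have hb : Integrable (fun ω => 2 * (S' t ω * D t ω)) μ := hi2.const_mul 2
              have ha : Integrable (fun ω => 2 * (S' t ω * D t ω) + D t ω ^ 2) μ :=
                hb.add hi3
              rw [integral_add hi1 ha, integral_add hb hi3, integral_const_mul]
          _ ≤ ((t + 1 : ℕ) : ℝ) * σ ^ 2 := by
              rw [hcross t]
              push_cast
              linarith [hvarle t, ih]
  -- inclusion of events
  have hincl : {ω | ∃ t ≤ T, M < |∑ s ∈ Finset.range t, Z (s + 1) ω|}
      ⊆ {ω | M < |S' T ω|} := by
    intro ω hω
    obtain ⟨t, htT, ht⟩ := hω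
    have hex : ∃ t, M < |S t ω| := ⟨t, ht⟩
    set t0 := Nat.find hex with ht0def
    have ht0P : M < |S t0 ω| := Nat.find_spec hex
    have ht0min : ∀ s, s < t0 → |S s ω| ≤ M := fun s hs =>
      le_of_not_gt (Nat.find_min hex hs)
    have ht0T : t0 ≤ T := le_trans (Nat.find_min' hex ht) htT
    have hDeq : ∀ r, r < t0 → D r ω = Z (r + 1) ω := by
      intro r hr
      have hmem : ω ∈ B r := by
        simp only [hBdef, Set.mem_setOf_eq]
        intro s hs
        exact ht0min s (lt_of_le_of_lt hs hr)
      simp [hDdef, Set.indicator_of_mem hmem]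
    have hD0 : ∀ r, t0 ≤ r → D r ω = 0 := by
      intro r hr
      have hmem : ω ∉ B r := by
        simp only [hBdef, Set.mem_setOf_eq]
        intro hall
        exact absurd (hall t0 hr) (not_le.mpr ht0P)
      simp [hDdef, Set.indicator_of_notMem hmem]
    have h1 : S' T ω = S' t0 ω := by
      simp only [hS'def]
      exact (Finset.sum_subset (Finset.range_subset_range.mpr ht0T)
        (fun r _ hr => hD0 r (by simpa using hr))).symm
    have h2 : S' t0 ω = S t0 ω := by
      simp only [hS'def, hSdef]
      exact Finset.sum_congr rfl (fun r hr => hDeq r (Finset.mem_range.mp hr))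
    show M < |S' T ω|
    rw [h1, h2]
    exact ht0P
  -- Chebyshev
  set A : Set Ω := {ω | M < |S' T ω|} with hAdef
  have hAmeas : MeasurableSet A := by
    show MeasurableSet ((fun ω => |S' T ω|) ⁻¹' Set.Ioi M)
    exact (measurable_abs.comp ((hS'meas T).mono (F.le T)).measurable) measurableSet_Ioi
  have hkey : M ^ 2 * (μ A).toReal ≤ ∫ ω, (S' T ω) ^ 2 ∂μ := by
    calc M ^ 2 * (μ A).toReal ≤ ∫ ω in A, (S' T ω) ^ 2 ∂μ := by
          rw [mul_comm, ← smul_eq_mul, ← measureReal_def]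
          refine setIntegral_ge_of_const_le hAmeas (measure_ne_top μ A) (fun x hx => ?_)
            ((hS'L2 T).integrable_sq.integrableOn)
          have hx' : M ≤ |S' T x| := le_of_lt hx
          calc M ^ 2 ≤ |S' T x| ^ 2 := pow_le_pow_left₀ hM.le hx' 2
            _ = (S' T x) ^ 2 := sq_abs _
      _ ≤ ∫ ω, (S' T ω) ^ 2 ∂μ := setIntegral_le_integral ((hS'L2 T).integrable_sq)
            (Filter.Eventually.of_forall fun ω => sq_nonneg _)
  have hfinal : (μ A).toReal ≤ (T : ℝ) * σ ^ 2 / M ^ 2 := by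
    rw [le_div_iff₀ (by positivity : (0:ℝ) < M ^ 2)]
    nlinarith [hmom T, hkey]
  calc μ {ω | ∃ t ≤ T, M < |∑ s ∈ Finset.range t, Z (s + 1) ω|}
      ≤ μ A := measure_mono hincl
    _ = ENNReal.ofReal ((μ A).toReal) := (ENNReal.ofReal_toReal (measure_ne_top μ A)).symm
    _ ≤ ENNReal.ofReal ((T : ℝ) * σ ^ 2 / M ^ 2) := ENNReal.ofReal_le_ofReal hfinal

end
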